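/- Barycentric refinement estimate: let G₁ be the Barycentric refinement of G and let d be the maximal vertex degree of G. If G has at least one vertex, then every eigenvalue μ of the Kirchhoff Laplacian of G₁ satisfies μ ≤ (d + 3) − 1/(d + 3). -/

import Mathlib

open Matrix

variable {V : Type*} [Fintype V] [DecidableEq V]

/-- The simplices of the 1-dimensional simplicial complex of a graph: vertices and edges. -/
abbrev Simplex (G : SimpleGraph V) [DecidableRel G.Adj] := V ⊕ G.edgeSet

variable (G : SimpleGraph V) [DecidableRel G.Adj]

/-- The Barycentric refinement of `G`: vertices and edges of `G` are the new vertices,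
and a vertex is joined to each edge containing it. -/
def bary : SimpleGraph (Simplex G) where
  Adj x y :=
    match x, y with
    | Sum.inl u, Sum.inr f => u ∈ (f : Sym2 V)
    | Sum.inr f, Sum.inl u => u ∈ (f : Sym2 V)
    | _, _ => False
  symm := by
    constructor
    rintro (u | f) (w | g) h
    · exact h.elim
    · exact h
    · exact h
    · exact h.elim
  loopless := by
    constructor
    rintro (u | f) h
    · exact h.elim
    · exact h.elim

instance : DecidableRel (bary G).Adj := fun x y =>
  match x, y with
  | Sum.inl u, Sum.inr f => inferInstanceAs (Decidable (u ∈ (f : Sym2 V)))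
  | Sum.inr f, Sum.inl u => inferInstanceAs (Decidable (u ∈ (f : Sym2 V)))
  | Sum.inl _, Sum.inl _ => inferInstanceAs (Decidable False)
  | Sum.inr _, Sum.inr _ => inferInstanceAs (Decidable False)

/-- The Kirchhoff Laplacian of the Barycentric refinement. -/
def kirchhoffBary : Matrix (Simplex G) (Simplex G) ℝ :=
  Matrix.diagonal (fun x => ((bary G).degree x : ℝ)) - (bary G).adjMatrix ℝ

open Finset

lemma bary_degree_inl (u : V) : (bary G).degree (Sum.inl u) ≤ G.degree u := by
  classical
  unfold SimpleGraph.degree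
  apply Finset.card_le_card_of_injOn
    (fun x => match x with
      | Sum.inl v => v
      | Sum.inr f => if h : u ∈ (f : Sym2 V) then Sym2.Mem.other' h else u)
  · rintro (v | f) hx
    · exact (((bary G).mem_neighborFinset _ _).mp hx).elim
    · have h : u ∈ (f : Sym2 V) := ((bary G).mem_neighborFinset _ _).mp hx
      simp only [dif_pos h]
      rw [Finset.mem_coe, SimpleGraph.mem_neighborFinset, ← SimpleGraph.mem_edgeSet, Sym2.other_spec' h]
      exact f.2
  · rintro (v | f) hx (v' | g) hy hxy
    · exact (((bary G).mem_neighborFinset _ _).mp hx).elim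
    · exact (((bary G).mem_neighborFinset _ _).mp hx).elim
    · exact (((bary G).mem_neighborFinset _ _).mp hy).elim
    · have hf : u ∈ (f : Sym2 V) := ((bary G).mem_neighborFinset _ _).mp hx
      have hg : u ∈ (g : Sym2 V) := ((bary G).mem_neighborFinset _ _).mp hy
      simp only [dif_pos hf, dif_pos hg] at hxy
      congr 1
      exact Subtype.ext (by rw [← Sym2.other_spec' hf, ← Sym2.other_spec' hg, hxy])

lemma bary_degree_inr (f : G.edgeSet) : (bary G).degree (Sum.inr f) ≤ 2 := by
  obtain ⟨e, he⟩ := f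
  induction e using Sym2.ind with
  | _ a b =>
    unfold SimpleGraph.degree
    have hsub : (bary G).neighborFinset (Sum.inr ⟨s(a, b), he⟩) ⊆ {Sum.inl a, Sum.inl b} := by
      rintro (u | g) hx
      · have h : u ∈ (⟨s(a,b), he⟩ : G.edgeSet).1 :=
          ((bary G).mem_neighborFinset _ _).mp hx
        rcases Sym2.mem_iff.mp h with rfl | rfl
        · exact Finset.mem_insert_self _ _
        · exact Finset.mem_insert_of_mem (Finset.mem_singleton_self _)
      · exact (((bary G).mem_neighborFinset _ _).mp hx).elim
    calc ((bary G).neighborFinset _).card ≤ ({Sum.inl a, Sum.inl b} : Finset (Simplex G)).card :=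
          Finset.card_le_card hsub
      _ ≤ 2 := (Finset.card_insert_le _ _).trans (by simp)

lemma sq_sub_le_aux {t x y : ℝ} (ht : 0 < t) :
    (x - y) ^ 2 ≤ (1 + t) * x ^ 2 + (1 + 1 / t) * y ^ 2 := by
  have h1 : 0 < 1 / t := by positivity
  have h2 : t * (1 / t) = 1 := mul_one_div_cancel (ne_of_gt ht)
  nlinarith [mul_nonneg h1.le (sq_nonneg (t * x + y)), sq_nonneg (t * x + y)]

/-- Barycentric refinement estimate: every eigenvalue `μ` of the Kirchhoff Laplacian of
the Barycentric refinement `G₁` of `G` satisfies `μ ≤ (d+3) - 1/(d+3)`, where `d` is the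
maximal vertex degree of `G`. -/
theorem barycentric_estimate [Nonempty V] (μ : ℝ)
    (hμ : ∃ w : Simplex G → ℝ, w ≠ 0 ∧ (kirchhoffBary G).mulVec w = μ • w) :
    μ ≤ ((G.maxDegree : ℝ) + 3) - 1 / ((G.maxDegree : ℝ) + 3) := by
  classical
  obtain ⟨w, hw0, hweq⟩ := hμ
  set d : ℝ := (G.maxDegree : ℝ) with hdd
  have hd0 : (0 : ℝ) ≤ d := Nat.cast_nonneg _
  have hden : (0 : ℝ) < 2 * d + 1 := by linarith
  set a : ℝ := 1 + 4 / (2 * d + 1) with hadef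
  set b : ℝ := 1 + (2 * d + 1) / 4 with hbdef
  have ha : 0 ≤ a := by rw [hadef]; positivity
  have hb : 0 ≤ b := by rw [hbdef]; positivity
  set c : Simplex G → ℝ := Sum.elim (fun _ => a) (fun _ => b) with hcdef
  have ht : (0 : ℝ) < 4 / (2 * d + 1) := by positivity
  have hbt : b = 1 + 1 / (4 / (2 * d + 1)) := by rw [hbdef, one_div_div]
  -- per-pair inequality
  have hpair : ∀ i j, (bary G).Adj i j → (w i - w j) ^ 2 ≤ c i * w i ^ 2 + c j * w j ^ 2 := by
    rintro (u | f) (v | g) hij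
    · exact hij.elim
    · have h := sq_sub_le_aux (x := w (Sum.inl u)) (y := w (Sum.inr g)) ht
      rw [← hbt] at h
      simpa [hcdef] using h
    · have h := sq_sub_le_aux (x := w (Sum.inl v)) (y := w (Sum.inr f)) ht
      rw [← hbt] at h
      have hsq : (w (Sum.inr f) - w (Sum.inl v)) ^ 2
          = (w (Sum.inl v) - w (Sum.inr f)) ^ 2 := by ring
      rw [hsq]
      simpa [hcdef] using h.trans (by linarith)
    · exact hij.elim
  -- degree * coefficient bound
  have hdegc : ∀ i : Simplex G, ((bary G).degree i : ℝ) * c i ≤ d + 5 / 2 := by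
    rintro (u | f)
    · have h1 : ((bary G).degree (Sum.inl u) : ℝ) ≤ d := by
        rw [hdd]
        exact_mod_cast (bary_degree_inl G u).trans (G.degree_le_maxDegree u)
      have h2 : d * a ≤ d + 5 / 2 := by
        have : d * a = d + 4 * d / (2 * d + 1) := by rw [hadef]; ring
        have h3 : 4 * d / (2 * d + 1) ≤ 5 / 2 := by
          rw [div_le_iff₀ hden]; linarith
        linarith
      calc ((bary G).degree (Sum.inl u) : ℝ) * c (Sum.inl u)
          = ((bary G).degree (Sum.inl u) : ℝ) * a := by rw [hcdef]; rfl
        _ ≤ d * a := mul_le_mul_of_nonneg_right h1 ha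
        _ ≤ d + 5 / 2 := h2
    · have h1 : ((bary G).degree (Sum.inr f) : ℝ) ≤ 2 := by
        exact_mod_cast bary_degree_inr G f
      have h2 : 2 * b = d + 5 / 2 := by rw [hbdef]; ring
      calc ((bary G).degree (Sum.inr f) : ℝ) * c (Sum.inr f)
          = ((bary G).degree (Sum.inr f) : ℝ) * b := by rw [hcdef]; rfl
        _ ≤ 2 * b := mul_le_mul_of_nonneg_right h1 hb
        _ = d + 5 / 2 := h2
  -- quadratic form
  have hQ : w ⬝ᵥ (kirchhoffBary G *ᵥ w)
      = (∑ i, ∑ j, if (bary G).Adj i j then (w i - w j) ^ 2 else 0) / 2 := by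
    rw [show kirchhoffBary G = (bary G).lapMatrix ℝ from rfl,
      ← Matrix.toLinearMap₂'_apply', SimpleGraph.lapMatrix_toLinearMap₂']
  have hμw : w ⬝ᵥ (kirchhoffBary G *ᵥ w) = μ * (w ⬝ᵥ w) := by
    rw [hweq, dotProduct_smul, smul_eq_mul]
  have hwpos : 0 < w ⬝ᵥ w := by
    obtain ⟨i, hi⟩ := Function.ne_iff.mp hw0
    exact Finset.sum_pos' (fun j _ => mul_self_nonneg _)
      ⟨i, Finset.mem_univ i, mul_self_pos.mpr hi⟩
  -- single-index sum
  have hA : ∀ K : Simplex G → ℝ,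
      (∑ i, ∑ j, if (bary G).Adj i j then K i else 0)
        = ∑ i, ((bary G).degree i : ℝ) * K i := by
    intro K
    refine Finset.sum_congr rfl fun i _ => ?_
    rw [← Finset.sum_filter, Finset.sum_const,
      ← SimpleGraph.neighborFinset_eq_filter, SimpleGraph.degree, nsmul_eq_mul]
  -- main sum bound
  have hsum : (∑ i, ∑ j, if (bary G).Adj i j then (w i - w j) ^ 2 else 0)
      ≤ 2 * ((d + 5 / 2) * (w ⬝ᵥ w)) := by
    have step1 : (∑ i, ∑ j, if (bary G).Adj i j then (w i - w j) ^ 2 else 0)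
        ≤ (∑ i, ∑ j, if (bary G).Adj i j then c i * w i ^ 2 else 0)
          + (∑ i, ∑ j, if (bary G).Adj i j then c j * w j ^ 2 else 0) := by
      rw [← Finset.sum_add_distrib]
      refine Finset.sum_le_sum fun i _ => ?_
      rw [← Finset.sum_add_distrib]
      refine Finset.sum_le_sum fun j _ => ?_
      split_ifs with h
      · exact hpair i j h
      · simp
    have step2 : (∑ i, ∑ j, if (bary G).Adj i j then c j * w j ^ 2 else 0)
        = ∑ i, ∑ j, if (bary G).Adj i j then c i * w i ^ 2 else 0 := by
      rw [Finset.sum_comm]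
      refine Finset.sum_congr rfl fun i _ => Finset.sum_congr rfl fun j _ => ?_
      exact if_congr ((bary G).adj_comm j i) rfl rfl
    have step3 : (∑ i, ((bary G).degree i : ℝ) * (c i * w i ^ 2))
        ≤ (d + 5 / 2) * (w ⬝ᵥ w) := by
      have : (w ⬝ᵥ w) = ∑ i, w i ^ 2 := by
        simp [dotProduct, sq]
      rw [this, Finset.mul_sum]
      refine Finset.sum_le_sum fun i _ => ?_
      rw [← mul_assoc]
      exact mul_le_mul_of_nonneg_right (hdegc i) (sq_nonneg _)
    calc (∑ i, ∑ j, if (bary G).Adj i j then (w i - w j) ^ 2 else 0)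
        ≤ _ + _ := step1
      _ = 2 * ∑ i, ∑ j, if (bary G).Adj i j then c i * w i ^ 2 else 0 := by
          rw [step2]; ring
      _ = 2 * ∑ i, ((bary G).degree i : ℝ) * (c i * w i ^ 2) := by
          rw [hA (fun i => c i * w i ^ 2)]
      _ ≤ 2 * ((d + 5 / 2) * (w ⬝ᵥ w)) := by linarith [step3]
  have hμle : μ ≤ d + 5 / 2 := by
    have h1 : μ * (w ⬝ᵥ w) ≤ (d + 5 / 2) * (w ⬝ᵥ w) := by
      rw [← hμw, hQ]; linarith
    exact le_of_mul_le_mul_right h1 hwpos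
  have h13 : 1 / (d + 3) ≤ 1 / 2 := by
    rw [div_le_div_iff₀ (by linarith) two_pos]; linarith
  linarith
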